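/- arXiv:2502.06429 — 4 statements merged into one kernel-verified Lean document; each statement's English description precedes it below -/
import Mathlib

section
/- If 0 < β < 1, then m = 0 is the unique solution in [-1,1] of the equation (1-m)e^{βm} = (1+m)e^{-βm}. -/
open Real

private lemma cw_mono (β : ℝ) (hβ1 : β < 1) :
    StrictMonoOn (fun x : ℝ => Real.log (1 + x) - Real.log (1 - x) - 2 * β * x)
      (Set.Ico 0 1) := by
  apply strictMonoOn_of_deriv_pos (convex_Ico 0 1)
  · apply ContinuousOn.sub
    apply ContinuousOn.sub
    · exact ContinuousOn.log (by fun_prop) (fun x hx => by nlinarith [hx.1, hx.2])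
    · exact ContinuousOn.log (by fun_prop) (fun x hx => by nlinarith [hx.1, hx.2])
    · fun_prop
  · intro x hx
    rw [interior_Ico] at hx
    obtain ⟨hx0, hx1⟩ := hx
    have h1 : (1 : ℝ) + x ≠ 0 := by nlinarith
    have h2 : (1 : ℝ) - x ≠ 0 := by nlinarith
    have d1 : HasDerivAt (fun x : ℝ => Real.log (1 + x)) (1 / (1 + x)) x := by
      have := (Real.hasDerivAt_log h1).comp x ((hasDerivAt_id x).const_add 1)
      simpa [Function.comp_def] using this
    have d2 : HasDerivAt (fun x : ℝ => Real.log (1 - x)) (-(1 / (1 - x))) x := by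
      have := (Real.hasDerivAt_log h2).comp x ((hasDerivAt_id x).neg.const_add 1)
      simpa [div_eq_mul_inv, Function.comp_def] using this
    have d3 : HasDerivAt (fun x : ℝ => Real.log (1 + x) - Real.log (1 - x) - 2 * β * x)
        (1 / (1 + x) - -(1 / (1 - x)) - 2 * β) x := by
      have d4 : HasDerivAt (fun x : ℝ => 2 * β * x) (2 * β) x := by
        simpa using (hasDerivAt_id x).const_mul (2 * β)
      exact (d1.sub d2).sub d4
    rw [d3.deriv]
    have hp1 : (0:ℝ) < 1 + x := by linarith
    have hp2 : (0:ℝ) < 1 - x := by linarith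
    have : 1 / (1 + x) + 1 / (1 - x) = 2 / (1 - x ^ 2) := by
      rw [div_add_div _ _ h1 h2]
      congr 1 <;> ring
    have h2x : (0:ℝ) < 1 - x ^ 2 := by nlinarith
    have hge : 2 ≤ 2 / (1 - x ^ 2) := by
      rw [le_div_iff₀ h2x]; nlinarith
    nlinarith [this]

private lemma cw_key (β : ℝ) (hβ0 : 0 < β) (hβ1 : β < 1) (m : ℝ) (hm0 : 0 < m)
    (hm1 : m < 1) : (1 - m) * exp (β * m) < (1 + m) * exp (-(β * m)) := by
  have hmono := cw_mono β hβ1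
  have h := hmono (Set.mem_Ico.2 ⟨le_refl 0, one_pos⟩)
    (Set.mem_Ico.2 ⟨hm0.le, hm1⟩) hm0
  simp only [Real.log_one, add_zero, sub_zero, mul_zero, sub_self, zero_sub] at h
  -- h : 0 < log (1+m) - log (1-m) - 2*β*m  (roughly)
  have hp1 : (0:ℝ) < 1 + m := by linarith
  have hp2 : (0:ℝ) < 1 - m := by linarith
  have hlog : Real.log (1 - m) + 2 * β * m < Real.log (1 + m) := by linarith
  have := Real.exp_lt_exp.2 hlog
  rw [Real.exp_add, Real.exp_log hp2, Real.exp_log hp1] at this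
  have he : exp (2 * β * m) = exp (β * m) * exp (β * m) := by
    rw [← Real.exp_add]; ring_nf
  have hposn : 0 < exp (-(β * m)) := Real.exp_pos _
  have hkey : (1 - m) * exp (β * m) * exp (β * m) < 1 + m := by nlinarith [this, he]
  have hmul : exp (β * m) * exp (-(β * m)) = 1 := by
    rw [← Real.exp_add]; simp
  nlinarith [Real.exp_pos (β * m)]

theorem curie_weiss_unique_critical_point_high_temp (β : ℝ) (hβ0 : 0 < β) (hβ1 : β < 1) :
    ∀ m ∈ Set.Icc (-1 : ℝ) 1,
      ((1 - m) * exp (β * m) = (1 + m) * exp (-β * m) ↔ m = 0) := by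
  intro m hm
  obtain ⟨hml, hmr⟩ := hm
  constructor
  · intro heq
    by_contra hne
    rcases lt_or_gt_of_ne hne with hneg | hpos
    · -- m < 0; apply key to -m
      rcases eq_or_lt_of_le hml with h1 | h1
      · rw [← h1] at heq
        norm_num at heq
      · have hkey := cw_key β hβ0 hβ1 (-m) (by linarith) (by linarith)
        have e1 : β * (-m) = -(β * m) := by ring
        have e2 : -(β * (-m)) = β * m := by ring
        rw [e1] at hkey
        have e3 : exp (-(β * (-m))) = exp (β * m) := by ring_nf
        have : (1 - -m) * exp (-(β * m)) < (1 + -m) * exp (β * m) := by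
          calc (1 - -m) * exp (-(β*m)) < (1 + -m) * exp (-(β * -m)) := by
                have := cw_key β hβ0 hβ1 (-m) (by linarith) (by linarith)
                convert this using 3 <;> ring
            _ = (1 + -m) * exp (β * m) := by ring_nf
        rw [show -β * m = -(β*m) by ring] at heq
        nlinarith [this, heq]
    · rcases eq_or_lt_of_le hmr with h1 | h1
      · rw [h1] at heq
        norm_num at heq
      · have hkey := cw_key β hβ0 hβ1 m hpos h1
        rw [show -β * m = -(β*m) by ring] at heq
        linarith
  · rintro rfl; simp
end

section
/- If β > 1, there exists m₊ ∈ (0,1) such that (1-m₊)e^{βm₊} = (1+m₊)e^{-βm₊}, i.e. the Curie-Weiss drift has a zero strictly between 0 and 1. -/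
open Real

theorem curie_weiss_positive_zero_exists (β : ℝ) (hβ : 1 < β) :
    ∃ m ∈ Set.Ioo (0 : ℝ) 1,
      (1 - m) * exp (β * m) = (1 + m) * exp (-β * m) := by
  set f : ℝ → ℝ := fun m => (1 - m) * exp (β * m) - (1 + m) * exp (-β * m) with hf
  have hβ0 : (0:ℝ) < β := by linarith
  set m₀ : ℝ := (β - 1) / (2 * β) with hm₀
  have hm₀pos : 0 < m₀ := div_pos (by linarith) (by linarith)
  have hm₀lt : m₀ < 1 := by
    rw [hm₀, div_lt_one (by positivity)]; linarith
  have hcont : ContinuousOn f (Set.Icc m₀ 1) := by fun_prop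
  have hβm₀ : β * m₀ = (β - 1) / 2 := by
    rw [hm₀, mul_div_assoc', div_eq_div_iff (by positivity) (by norm_num)]; ring
  have hfa : 0 < f m₀ := by
    have h1 : (β - 1) + 1 < exp (β - 1) := add_one_lt_exp (by linarith : (β:ℝ) - 1 ≠ 0)
    have h2 : exp (β - 1) = exp (β * m₀) * exp (β * m₀) := by
      rw [← exp_add, hβm₀]; ring_nf
    have h3 : 0 < exp (-β * m₀) := exp_pos _
    have h4 : exp (β * m₀) * exp (-β * m₀) = 1 := by rw [← exp_add]; ring_nf; exact exp_zero
    have h5 : (1 - m₀) * β = 1 + m₀ + (β-1)^2/(2*β) := by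
      rw [hm₀]; field_simp; ring
    have h6 : 0 < exp (β * m₀) := exp_pos _
    have hm1 : m₀ < 1 := hm₀lt
    -- f m₀ > 0 ⟺ (1-m₀) exp(βm₀) > (1+m₀) exp(-βm₀)
    -- multiply by exp(βm₀): (1-m₀) exp(β-1) > 1+m₀
    have key : (1 - m₀) * exp (β - 1) > 1 + m₀ := by
      nlinarith [sq_nonneg (β - 1), exp_pos (β - 1)]
    have : (1 - m₀) * exp (β * m₀) * exp (β * m₀) > (1 + m₀) := by
      calc (1 - m₀) * exp (β * m₀) * exp (β * m₀) = (1 - m₀) * exp (β - 1) := by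
            rw [h2]; ring
        _ > 1 + m₀ := key
    have := mul_lt_mul_of_pos_right this h3
    simp only [hf]
    nlinarith [this, h4]
  have hfb : f 1 < 0 := by
    simp only [hf]
    have := exp_pos (-β * 1)
    nlinarith
  have := intermediate_value_Ioo' (le_of_lt hm₀lt) hcont (a := m₀) (b := 1)
  have h0 : (0:ℝ) ∈ Set.Ioo (f 1) (f m₀) := ⟨hfb, hfa⟩
  obtain ⟨m, hmI, hfm⟩ := this h0
  refine ⟨m, ⟨lt_trans hm₀pos hmI.1, hmI.2⟩, ?_⟩
  have : (1 - m) * exp (β * m) - (1 + m) * exp (-β * m) = 0 := hfm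
  linarith
end

section
/- For β > 1, the function f(β) = β(1 - √(1 - 1/β))² · e^{2β√(1-1/β)} satisfies f(1) = 1 and f'(β) > 0 for all β > 1; consequently f(β) > 1 for all β > 1. -/
open Real

noncomputable def cwRatio (β : ℝ) : ℝ :=
  β * (1 - Real.sqrt (1 - 1/β))^2 * Real.exp (2 * β * Real.sqrt (1 - 1/β))

lemma cwRatio_hasDeriv {β : ℝ} (hβ : 1 < β) :
    HasDerivAt cwRatio
      (Real.exp (2 * β * Real.sqrt (1 - 1/β)) * (1 - Real.sqrt (1 - 1/β))^2
        * (2 * β * Real.sqrt (1 - 1/β))) β := by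
  have hβ0 : (0:ℝ) < β := lt_trans one_pos hβ
  have hu0 : 0 < 1 - 1/β := by
    have : 1/β < 1 := by rw [div_lt_one hβ0]; exact hβ
    linarith
  have hs0 : 0 < Real.sqrt (1 - 1/β) := Real.sqrt_pos.mpr hu0
  have hs2 : Real.sqrt (1 - 1/β) ^ 2 = 1 - 1/β := Real.sq_sqrt hu0.le
  have hinv : HasDerivAt (fun x : ℝ => 1 - 1/x) (1/β^2) β := by
    have := (hasDerivAt_inv (ne_of_gt hβ0)).const_sub 1
    simp only [one_div] at this ⊢
    rwa [neg_neg] at this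
  have hs : HasDerivAt (fun x : ℝ => Real.sqrt (1 - 1/x))
      (1/β^2 / (2 * Real.sqrt (1 - 1/β))) β := hinv.sqrt (ne_of_gt hu0)
  have hsq := (hs.const_sub 1).pow 2
  have hlin : HasDerivAt (fun x : ℝ => 2 * x) 2 β := by
    simpa using (hasDerivAt_id β).const_mul 2
  have hE := (hlin.mul hs).exp
  have hfull := ((hasDerivAt_id β).mul hsq).mul hE
  have heq : HasDerivAt cwRatio
      ((1 * (1 - Real.sqrt (1 - 1/β))^2 +
          β * ((2:ℕ) * (1 - Real.sqrt (1 - 1/β))^(2-1) * -(1/β^2 / (2 * Real.sqrt (1 - 1/β))))) *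
          Real.exp (2 * β * Real.sqrt (1 - 1/β)) +
        β * (1 - Real.sqrt (1 - 1/β))^2 *
          (Real.exp (2 * β * Real.sqrt (1 - 1/β)) *
            (2 * Real.sqrt (1 - 1/β) + 2 * β * (1/β^2 / (2 * Real.sqrt (1 - 1/β)))))) β :=
    hfull
  convert heq using 1
  set s := Real.sqrt (1 - 1/β) with hsdef
  have hβne : β ≠ 0 := ne_of_gt hβ0
  have hsne : s ≠ 0 := ne_of_gt hs0
  field_simp
  ring_nf
  have hs2' : β * s ^ 2 = β - 1 := by
    rw [hs2]; field_simp
  linear_combination (2*(1-s)) * hs2'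

theorem cwRatio_one_and_monotone :
    cwRatio 1 = 1 ∧ (∀ β : ℝ, 1 < β → 0 < deriv cwRatio β) ∧
      ∀ β : ℝ, 1 < β → 1 < cwRatio β := by
  have h1 : cwRatio 1 = 1 := by simp [cwRatio]
  have h2 : ∀ β : ℝ, 1 < β → 0 < deriv cwRatio β := by
    intro β hβ
    rw [(cwRatio_hasDeriv hβ).deriv]
    have hβ0 : (0:ℝ) < β := lt_trans one_pos hβ
    have hu0 : 0 < 1 - 1/β := by
      have : 1/β < 1 := by rw [div_lt_one hβ0]; exact hβ
      linarith
    have hs0 : 0 < Real.sqrt (1 - 1/β) := Real.sqrt_pos.mpr hu0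
    have hs1 : Real.sqrt (1 - 1/β) < 1 := by
      have h01 : 0 < 1/β := by positivity
      have := Real.sqrt_lt_sqrt hu0.le (show 1 - 1/β < 1 by linarith)
      simpa using this
    exact mul_pos (mul_pos (Real.exp_pos _) (pow_pos (by linarith) 2)) (by positivity)
  refine ⟨h1, h2, ?_⟩
  have hne : ∀ x ∈ Set.Ici (1:ℝ), x ≠ 0 := fun x hx => by
    have : (1:ℝ) ≤ x := hx
    linarith
  have hsc : ContinuousOn (fun x : ℝ => Real.sqrt (1 - 1/x)) (Set.Ici 1) :=
    (continuousOn_const.sub (continuousOn_const.div continuousOn_id hne)).sqrt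
  have hcont : ContinuousOn cwRatio (Set.Ici 1) := by
    exact (continuousOn_id.mul ((continuousOn_const.sub hsc).pow 2)).mul
      (Real.continuous_exp.comp_continuousOn
        ((continuousOn_const.mul continuousOn_id).mul hsc))
  have hmono : StrictMonoOn cwRatio (Set.Ici 1) := by
    apply strictMonoOn_of_deriv_pos (convex_Ici 1) hcont
    intro x hx
    rw [interior_Ici] at hx
    exact h2 x hx
  intro β hβ
  have := hmono (Set.mem_Ici.mpr le_rfl) (le_of_lt hβ) hβ
  rwa [h1] at this
end

section
/- If β > 1 and m₊ ∈ (0,1) is the positive zero of the Curie-Weiss drift (i.e. (1+m₊)e^{-βm₊} = (1-m₊)e^{βm₊}), then m₊ > √(1 - 1/β), and consequently g''(m₊) > 0. -/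
open Real

theorem curie_weiss_mplus_gt_sqrt (β mplus : ℝ) (hβ : 1 < β)
    (hm : mplus ∈ Set.Ioo (0 : ℝ) 1)
    (heq : (1 + mplus) * exp (-β * mplus) = (1 - mplus) * exp (β * mplus)) :
    Real.sqrt (1 - 1/β) < mplus ∧
      0 < (2 * exp (β * mplus) / (1 + mplus)) * (1 - β + β * mplus ^ 2) := by
  obtain ⟨hm0, hm1⟩ := hm
  have hβ0 : (0:ℝ) < β := lt_trans one_pos hβ
  have h1 : 0 < 1 - 1/β := by
    have : 1/β < 1 := by rw [div_lt_one hβ0]; exact hβ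
    linarith
  set s := Real.sqrt (1 - 1/β) with hsdef
  have hs2 : s^2 = 1 - 1/β := Real.sq_sqrt h1.le
  have hs0 : 0 < s := Real.sqrt_pos.mpr h1
  have hs1 : s < 1 := by
    have h2 : s^2 < 1 := by
      rw [hs2]
      have : 0 < 1/β := by positivity
      linarith
    nlinarith
  have hmain : s < mplus := by
    by_contra hle
    push_neg at hle
    set φ : ℝ → ℝ := fun x => Real.log (1+x) - Real.log (1-x) - 2*β*x with hφ
    have hanti : StrictAntiOn φ (Set.Icc 0 s) := by
      apply strictAntiOn_of_deriv_neg (convex_Icc 0 s)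
      · apply ContinuousOn.sub
        apply ContinuousOn.sub
        · apply ContinuousOn.log (by fun_prop)
          intro x hx
          have := hx.1
          intro h; linarith [(by linarith : (1:ℝ)+x = 0) ▸ h]
        · apply ContinuousOn.log (by fun_prop)
          intro x hx
          have hx2 := hx.2
          have : x < 1 := lt_of_le_of_lt hx2 hs1
          intro h; linarith
        · fun_prop
      · intro x hx
        rw [interior_Icc] at hx
        obtain ⟨hx0, hxs⟩ := hx
        have hx1 : x < 1 := lt_trans hxs hs1
        have h1x : 0 < 1 - x := by linarith
        have h1x' : 0 < 1 + x := by linarith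
        have d1 : HasDerivAt (fun x : ℝ => Real.log (1+x)) (1/(1+x)) x := by
          have := (Real.hasDerivAt_log (ne_of_gt h1x')).comp x
            ((hasDerivAt_id x).const_add 1)
          rw [one_div]; simp at this; exact this
        have d2 : HasDerivAt (fun x : ℝ => Real.log (1-x)) (-(1/(1-x))) x := by
          have := (Real.hasDerivAt_log (ne_of_gt h1x)).comp x
            ((hasDerivAt_id x).const_sub 1)
          rw [one_div]; simp at this; exact this
        have d3 : HasDerivAt (fun x : ℝ => 2*β*x) (2*β) x := by
          simpa using (hasDerivAt_id x).const_mul (2*β)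
        have hd : HasDerivAt φ (1/(1+x) + 1/(1-x) - 2*β) x := by
          have := (d1.sub d2).sub d3
          rw [one_div, one_div]; simp [sub_neg_eq_add] at this; exact this
        rw [hd.deriv]
        have hx2 : x^2 < 1 - 1/β := by nlinarith
        have hgt : 1/β < 1 - x^2 := by linarith
        rw [div_lt_iff₀ hβ0] at hgt
        have key : (1/(1+x) + 1/(1-x)) * ((1+x)*(1-x)) = 2 := by
          field_simp
          ring
        have hprod : 0 < (1+x)*(1-x) := mul_pos h1x' h1x
        nlinarith [key, hprod, hgt]
    have hφm : φ mplus = 0 := by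
      have h1m : 0 < 1 - mplus := by linarith
      have h1p : 0 < 1 + mplus := by linarith
      have hlog := congrArg Real.log heq
      rw [Real.log_mul (ne_of_gt h1p) (exp_ne_zero _),
        Real.log_mul (ne_of_gt h1m) (exp_ne_zero _), Real.log_exp, Real.log_exp] at hlog
      simp only [hφ]
      linarith
    have h0mem : (0:ℝ) ∈ Set.Icc 0 s := Set.left_mem_Icc.mpr hs0.le
    have hmmem : mplus ∈ Set.Icc 0 s := ⟨hm0.le, hle⟩
    have := hanti h0mem hmmem hm0
    have hφ0 : φ 0 = 0 := by simp [hφ]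
    rw [hφ0, hφm] at this
    exact lt_irrefl 0 this
  refine ⟨hmain, ?_⟩
  have hsq : 1 - 1/β < mplus^2 := by nlinarith
  have hpos : 0 < 1 - β + β * mplus^2 := by
    have h := mul_lt_mul_of_pos_left hsq hβ0
    have : β * (1 - 1/β) = β - 1 := by field_simp
    nlinarith
  have hfac : 0 < 2 * exp (β * mplus) / (1 + mplus) := by
    apply div_pos
    · positivity
    · linarith
  exact mul_pos hfac hpos
end
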